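/- Suppose Q_{T,λ}(Δ) is invertible. Let d(Δ) be the minimizer over vectors supported on T∪Δ of L(b) = γ‖b_{T^c}‖₁ + (1/2)‖y − Ab‖₂² + (λ/2)‖b_T − μ̂_T‖₂², and let c(Δ) be the minimizer over the same set of the quadratic part L₁(b). Then ‖d(Δ) − c(Δ)‖₂ ≤ γ√|Δ| · f₁(Δ), where f₁(Δ) = sqrt( ‖(A_T'A_T + λI_T)^{-1} A_T' A_Δ P(Δ)‖₂² + ‖P(Δ)‖₂² ), with M = I − A_T(A_T'A_T + λI_T)^{-1}A_T' and P(Δ) = (A_Δ' M A_Δ)^{-1}. -/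

import Mathlib

open Matrix BigOperators Finset

noncomputable section

abbrev Idx {m : ℕ} (T : Finset (Fin m)) := {j : Fin m // j ∈ T}

/-- Submatrix of `A` consisting of the columns indexed by `T`. -/
def colsub {n m : ℕ} (A : Matrix (Fin n) (Fin m) ℝ) (T : Finset (Fin m)) :
    Matrix (Fin n) (Idx T) ℝ := Matrix.of fun i j => A i j.1

/-- Euclidean (ℓ2) norm of a finitely indexed vector. -/
def l2 {α : Type*} [Fintype α] (v : α → ℝ) : ℝ := Real.sqrt (∑ i, v i ^ 2)

/-- ℓ1 norm. -/
def l1 {α : Type*} [Fintype α] (v : α → ℝ) : ℝ := ∑ i, |v i|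

/-- ℓ∞ (sup) norm. -/
def linf {α : Type*} [Fintype α] (v : α → ℝ) : ℝ := ⨆ i, |v i|

/-- Spectral (ℓ2 operator) norm of a matrix. -/
def spec {α β : Type*} [Fintype α] [Fintype β] [DecidableEq β] (M : Matrix α β ℝ) : ℝ :=
  ‖LinearMap.toContinuousLinearMap (Matrix.toEuclideanLin M)‖

/-- `Q_{T,λ}(S) = A_{T∪S}' A_{T∪S} + λ·diag(I_T, 0_S)`. -/
def Qmat {n m : ℕ} (A : Matrix (Fin n) (Fin m) ℝ) (T S : Finset (Fin m)) (lam : ℝ) :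
    Matrix (Idx (T ∪ S)) (Idx (T ∪ S)) ℝ :=
  (colsub A (T ∪ S))ᵀ * colsub A (T ∪ S) +
    lam • (Matrix.of (fun i j => if i = j ∧ (i : Fin m) ∈ T then (1 : ℝ) else 0) :
      Matrix (Idx (T ∪ S)) (Idx (T ∪ S)) ℝ)

/-- `M_{T,λ} = I − A_T (A_T'A_T + λ I_T)⁻¹ A_T'`. -/
def Mmat {n m : ℕ} (A : Matrix (Fin n) (Fin m) ℝ) (T : Finset (Fin m)) (lam : ℝ) :
    Matrix (Fin n) (Fin n) ℝ :=
  1 - colsub A T * ((colsub A T)ᵀ * colsub A T + lam • 1)⁻¹ * (colsub A T)ᵀ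

/-- `P_{T,λ}(Δ) = (A_Δ' M A_Δ)⁻¹`. -/
def Pmat {n m : ℕ} (A : Matrix (Fin n) (Fin m) ℝ) (T Δ : Finset (Fin m)) (lam : ℝ) :
    Matrix (Idx Δ) (Idx Δ) ℝ :=
  ((colsub A Δ)ᵀ * Mmat A T lam * colsub A Δ)⁻¹

/-- The regularized least-squares estimate supported on `T ∪ S`:
`c_{T∪S} = Q⁻¹ (A_{T∪S}' y + [λμ̂_T ; 0_S])`, zero outside `T ∪ S`. -/
def cvec {n m : ℕ} (A : Matrix (Fin n) (Fin m) ℝ) (T S : Finset (Fin m)) (lam : ℝ)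
    (y : Fin n → ℝ) (μ : Fin m → ℝ) : Fin m → ℝ :=
  fun i => if h : i ∈ T ∪ S then
    (Qmat A T S lam)⁻¹.mulVec
      (fun j => (∑ k, A k j.1 * y k) + (if (j : Fin m) ∈ T then lam * μ j.1 else 0)) ⟨i, h⟩
  else 0

/-- The reg-mod-BPDN objective
`L(b) = γ‖b_{T^c}‖₁ + (1/2)‖y − Ab‖₂² + (λ/2)‖b_T − μ̂_T‖₂²`. -/
def Lobj {n m : ℕ} (A : Matrix (Fin n) (Fin m) ℝ) (T : Finset (Fin m)) (γ lam : ℝ)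
    (y : Fin n → ℝ) (μ : Fin m → ℝ) (b : Fin m → ℝ) : ℝ :=
  γ * (∑ i ∈ Tᶜ, |b i|) + (1/2) * (∑ i, (y i - A.mulVec b i) ^ 2) +
    (lam/2) * (∑ i ∈ T, (b i - μ i) ^ 2)

/-- The quadratic part `L₁(b) = (1/2)‖y − Ab‖₂² + (λ/2)‖b_T − μ̂_T‖₂²`. -/
def L1obj {n m : ℕ} (A : Matrix (Fin n) (Fin m) ℝ) (T : Finset (Fin m)) (lam : ℝ)
    (y : Fin n → ℝ) (μ : Fin m → ℝ) (b : Fin m → ℝ) : ℝ :=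
  (1/2) * (∑ i, (y i - A.mulVec b i) ^ 2) + (lam/2) * (∑ i ∈ T, (b i - μ i) ^ 2)

/-- `ERC_{T,λ}(Δ) = 1 − max_{ω∉T∪Δ} ‖P(Δ) A_Δ' M A_ω‖₁`. -/
def ERC {n m : ℕ} (A : Matrix (Fin n) (Fin m) ℝ) (T Δ : Finset (Fin m)) (lam : ℝ) : ℝ :=
  1 - ⨆ ω : Idx ((T ∪ Δ)ᶜ),
    l1 ((Pmat A T Δ lam * (colsub A Δ)ᵀ * Mmat A T lam).mulVec (fun i => A i ω.1))

/-- `f₁(Δ)`. -/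
def f1 {n m : ℕ} (A : Matrix (Fin n) (Fin m) ℝ) (T Δ : Finset (Fin m)) (lam : ℝ) : ℝ :=
  Real.sqrt
    (spec (((colsub A T)ᵀ * colsub A T + lam • 1)⁻¹ * (colsub A T)ᵀ * colsub A Δ *
        Pmat A T Δ lam) ^ 2 + spec (Pmat A T Δ lam) ^ 2)

/-- `f₂(Δ) = ‖Q⁻¹‖₂`. -/
def f2 {n m : ℕ} (A : Matrix (Fin n) (Fin m) ℝ) (T Δ : Finset (Fin m)) (lam : ℝ) : ℝ :=
  spec ((Qmat A T Δ lam)⁻¹)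

/-- `f₃(Δ) = ‖Q⁻¹ A_{T∪Δ}'‖₂`. -/
def f3 {n m : ℕ} (A : Matrix (Fin n) (Fin m) ℝ) (T Δ : Finset (Fin m)) (lam : ℝ) : ℝ :=
  spec ((Qmat A T Δ lam)⁻¹ * (colsub A (T ∪ Δ))ᵀ)

/-- `f₄(Δ̃) = sqrt(‖Q(Δ̃)⁻¹ A_{T∪Δ̃}' A_{Δ∖Δ̃}‖₂² + 1)`. -/
def f4 {n m : ℕ} (A : Matrix (Fin n) (Fin m) ℝ) (T Δ Δt : Finset (Fin m)) (lam : ℝ) : ℝ :=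
  Real.sqrt
    (spec ((Qmat A T Δt lam)⁻¹ * (colsub A (T ∪ Δt))ᵀ * colsub A (Δ \ Δt)) ^ 2 + 1)

/-- Numerator of `γ*`: `‖A_{(T∪Δ)^c}'(y − A c(Δ))‖_∞`. -/
def gammaNum {n m : ℕ} (A : Matrix (Fin n) (Fin m) ℝ) (T Δ : Finset (Fin m)) (lam : ℝ)
    (y : Fin n → ℝ) (μ : Fin m → ℝ) : ℝ :=
  linf (fun j : Idx ((T ∪ Δ)ᶜ) =>
    ∑ i, A i j.1 * (y i - A.mulVec (cvec A T Δ lam y μ) i))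

/-- `γ*_{T,λ}(Δ)`. -/
def gammaStar {n m : ℕ} (A : Matrix (Fin n) (Fin m) ℝ) (T Δ : Finset (Fin m)) (lam : ℝ)
    (y : Fin n → ℝ) (μ : Fin m → ℝ) : ℝ :=
  gammaNum A T Δ lam y μ / ERC A T Δ lam




lemma l2_nonneg {α : Type*} [Fintype α] (v : α → ℝ) : 0 ≤ l2 v := Real.sqrt_nonneg _

lemma l2_sq {α : Type*} [Fintype α] (v : α → ℝ) : l2 v ^ 2 = ∑ i, v i ^ 2 :=
  Real.sq_sqrt (Finset.sum_nonneg fun i _ => sq_nonneg _)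

lemma l2_eq_norm {α : Type*} [Fintype α] (v : α → ℝ) :
    l2 v = ‖(WithLp.equiv 2 (α → ℝ)).symm v‖ := by
  rw [EuclideanSpace.norm_eq]
  exact congrArg Real.sqrt (Finset.sum_congr rfl fun i _ => by rw [Real.norm_eq_abs, sq_abs]; rfl)

lemma spec_nonneg {α β : Type*} [Fintype α] [Fintype β] [DecidableEq β] (M : Matrix α β ℝ) :
    0 ≤ spec M := norm_nonneg _

lemma spec_neg {α β : Type*} [Fintype α] [Fintype β] [DecidableEq β] (M : Matrix α β ℝ) :
    spec (-M) = spec M := by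
  unfold spec; rw [map_neg, map_neg, norm_neg]

lemma l2_mulVec_le {α β : Type*} [Fintype α] [Fintype β] [DecidableEq β]
    (M : Matrix α β ℝ) (v : β → ℝ) : l2 (M.mulVec v) ≤ spec M * l2 v := by
  rw [l2_eq_norm, l2_eq_norm]
  have key : (LinearMap.toContinuousLinearMap (Matrix.toEuclideanLin M))
      ((WithLp.equiv 2 (β → ℝ)).symm v) = (WithLp.equiv 2 (α → ℝ)).symm (M.mulVec v) := by
    simp only [LinearMap.coe_toContinuousLinearMap', Matrix.toEuclideanLin,
      Matrix.toLin'_apply, LinearEquiv.trans_apply]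
    rfl
  rw [← key]
  exact (LinearMap.toContinuousLinearMap (Matrix.toEuclideanLin M)).le_opNorm _




lemma grad_bound (g a c : ℝ) (ha : 0 ≤ a) (hc : 0 ≤ c)
    (h : ∀ t : ℝ, 0 ≤ t * g + t ^ 2 / 2 * a + c * |t|) : |g| ≤ c := by
  refine le_of_forall_pos_le_add fun ε hε => ?_
  set s : ℝ := 2 * ε / (a + 1) with hs
  have hs0 : 0 < s := by positivity
  have hsa : s * a / 2 ≤ ε := by
    have h1 : s * (a + 1) = 2 * ε := by rw [hs]; exact div_mul_cancel₀ _ (ne_of_gt (by linarith))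
    nlinarith
  have h1 := h s; have h2 := h (-s)
  rw [abs_of_pos hs0] at h1
  rw [abs_neg, abs_of_pos hs0] at h2
  rw [abs_le]
  constructor <;> nlinarith

def gradf {n m : ℕ} (A : Matrix (Fin n) (Fin m) ℝ) (T : Finset (Fin m)) (lam : ℝ)
    (y : Fin n → ℝ) (μ : Fin m → ℝ) (b : Fin m → ℝ) (j : Fin m) : ℝ :=
  -(∑ i, A i j * (y i - A.mulVec b i)) + (if j ∈ T then lam * (b j - μ j) else 0)

def quadc {n m : ℕ} (A : Matrix (Fin n) (Fin m) ℝ) (T : Finset (Fin m)) (lam : ℝ)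
    (j : Fin m) : ℝ := (∑ i, A i j ^ 2) + (if j ∈ T then lam else 0)

lemma mulVec_pert {n m : ℕ} (A : Matrix (Fin n) (Fin m) ℝ) (b : Fin m → ℝ) (j : Fin m)
    (t : ℝ) (i : Fin n) :
    A.mulVec (fun k => b k + if k = j then t else 0) i = A.mulVec b i + t * A i j := by
  simp only [Matrix.mulVec, dotProduct, mul_add, Finset.sum_add_distrib, mul_ite, mul_zero]
  rw [Finset.sum_ite_eq' Finset.univ j (fun k => A i k * t)]
  simp [mul_comm]

lemma expandL1 {n m : ℕ} (A : Matrix (Fin n) (Fin m) ℝ) (T : Finset (Fin m)) (lam : ℝ)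
    (y : Fin n → ℝ) (μ : Fin m → ℝ) (b : Fin m → ℝ) (j : Fin m) (t : ℝ) :
    L1obj A T lam y μ (fun k => b k + if k = j then t else 0)
      = L1obj A T lam y μ b + t * gradf A T lam y μ b j + t ^ 2 / 2 * quadc A T lam j := by
  unfold L1obj gradf quadc
  have h1 : ∑ i, (y i - A.mulVec (fun k => b k + if k = j then t else 0) i) ^ 2
      = ∑ i, ((y i - A.mulVec b i) ^ 2 - 2 * t * (A i j * (y i - A.mulVec b i))
          + t ^ 2 * A i j ^ 2) := by
    refine Finset.sum_congr rfl fun i _ => ?_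
    rw [mulVec_pert]; ring
  have h2 : ∑ i ∈ T, ((b i + if i = j then t else 0) - μ i) ^ 2
      = (∑ i ∈ T, (b i - μ i) ^ 2) + (if j ∈ T then 2 * t * (b j - μ j) + t ^ 2 else 0) := by
    have : ∀ i ∈ T, ((b i + if i = j then t else 0) - μ i) ^ 2
        = (b i - μ i) ^ 2 + (if i = j then 2 * t * (b i - μ i) + t ^ 2 else 0) := by
      intro i _; split <;> ring
    rw [Finset.sum_congr rfl this, Finset.sum_add_distrib,
      Finset.sum_ite_eq' T j (fun i => 2 * t * (b i - μ i) + t ^ 2)]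
  rw [h1, h2]
  simp only [Finset.sum_add_distrib, Finset.sum_sub_distrib, ← Finset.mul_sum]
  split <;> ring

lemma expandl1 {m : ℕ} (T : Finset (Fin m)) (b : Fin m → ℝ) (j : Fin m) (t : ℝ) :
    ∑ i ∈ Tᶜ, |b i + if i = j then t else 0|
      = (∑ i ∈ Tᶜ, |b i|) + (if j ∈ Tᶜ then |b j + t| - |b j| else 0) := by
  have : ∀ i ∈ Tᶜ, |b i + if i = j then t else 0|
      = |b i| + (if i = j then |b j + t| - |b j| else 0) := by
    intro i _
    split
    · next h => subst h; ring
    · simp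
  rw [Finset.sum_congr rfl this, Finset.sum_add_distrib,
    Finset.sum_ite_eq' Tᶜ j (fun i => |b j + t| - |b j|)]

lemma Lobj_split {n m : ℕ} (A : Matrix (Fin n) (Fin m) ℝ) (T : Finset (Fin m)) (γ lam : ℝ)
    (y : Fin n → ℝ) (μ : Fin m → ℝ) (b : Fin m → ℝ) :
    Lobj A T γ lam y μ b = γ * (∑ i ∈ Tᶜ, |b i|) + L1obj A T lam y μ b := by
  unfold Lobj L1obj; ring

lemma quadc_nonneg {n m : ℕ} (A : Matrix (Fin n) (Fin m) ℝ) (T : Finset (Fin m)) {lam : ℝ}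
    (hlam : 0 ≤ lam) (j : Fin m) : 0 ≤ quadc A T lam j := by
  unfold quadc
  have : 0 ≤ ∑ i, A i j ^ 2 := Finset.sum_nonneg fun i _ => sq_nonneg _
  split <;> linarith

lemma opt_c {n m : ℕ} (A : Matrix (Fin n) (Fin m) ℝ) (T Δ : Finset (Fin m)) {lam : ℝ}
    (hlam : 0 ≤ lam) (y : Fin n → ℝ) (μ : Fin m → ℝ) (c : Fin m → ℝ)
    (hc0 : ∀ i ∉ T ∪ Δ, c i = 0)
    (hcmin : ∀ b : Fin m → ℝ, (∀ i ∉ T ∪ Δ, b i = 0) →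
      L1obj A T lam y μ c ≤ L1obj A T lam y μ b) :
    ∀ j ∈ T ∪ Δ, gradf A T lam y μ c j = 0 := by
  intro j hj
  have key : ∀ t : ℝ, 0 ≤ t * gradf A T lam y μ c j + t ^ 2 / 2 * quadc A T lam j
      + 0 * |t| := by
    intro t
    have hb : ∀ i ∉ T ∪ Δ, (fun k => c k + if k = j then t else 0) i = 0 := by
      intro i hi
      have hij : i ≠ j := fun h => hi (h ▸ hj)
      simp [hij, hc0 i hi]
    have h := hcmin _ hb
    rw [expandL1] at h; linarith
  exact abs_nonpos_iff.mp (grad_bound _ _ 0 (quadc_nonneg A T hlam j) le_rfl key)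

lemma opt_d {n m : ℕ} (A : Matrix (Fin n) (Fin m) ℝ) (T Δ : Finset (Fin m))
    (hTΔ : Disjoint T Δ) {γ lam : ℝ} (hγ : 0 < γ) (hlam : 0 ≤ lam)
    (y : Fin n → ℝ) (μ : Fin m → ℝ) (d : Fin m → ℝ)
    (hd0 : ∀ i ∉ T ∪ Δ, d i = 0)
    (hdmin : ∀ b : Fin m → ℝ, (∀ i ∉ T ∪ Δ, b i = 0) →
      Lobj A T γ lam y μ d ≤ Lobj A T γ lam y μ b) :
    (∀ j ∈ T, gradf A T lam y μ d j = 0) ∧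
    (∀ j ∈ Δ, |gradf A T lam y μ d j| ≤ γ) := by
  have main : ∀ j ∈ T ∪ Δ, ∀ t : ℝ,
      Lobj A T γ lam y μ d ≤ Lobj A T γ lam y μ d + γ * (if j ∈ Tᶜ then |d j + t| - |d j| else 0)
        + t * gradf A T lam y μ d j + t ^ 2 / 2 * quadc A T lam j := by
    intro j hj t
    have hb : ∀ i ∉ T ∪ Δ, (fun k => d k + if k = j then t else 0) i = 0 := by
      intro i hi
      have hij : i ≠ j := fun h => hi (h ▸ hj)
      simp [hij, hd0 i hi]
    have h := hdmin _ hb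
    rw [Lobj_split A T γ lam y μ (fun k => d k + if k = j then t else 0), expandL1, expandl1, Lobj_split A T γ lam y μ d] at h
    linarith
  constructor
  · intro j hj
    have key : ∀ t : ℝ, 0 ≤ t * gradf A T lam y μ d j + t ^ 2 / 2 * quadc A T lam j
        + 0 * |t| := by
      intro t
      have h := main j (Finset.mem_union_left _ hj) t
      rw [if_neg (by simpa using hj)] at h
      linarith
    exact abs_nonpos_iff.mp (grad_bound _ _ 0 (quadc_nonneg A T hlam j) le_rfl key)
  · intro j hj
    have hjT : j ∉ T := Finset.disjoint_right.mp hTΔ hj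
    have key : ∀ t : ℝ, 0 ≤ t * gradf A T lam y μ d j + t ^ 2 / 2 * quadc A T lam j
        + γ * |t| := by
      intro t
      have h := main j (Finset.mem_union_right _ hj) t
      rw [if_pos (Finset.mem_compl.mpr hjT)] at h
      have habs : |d j + t| - |d j| ≤ |t| := by
        have := abs_add_le (d j) t; have := abs_nonneg (d j); linarith [abs_sub_abs_le_abs_sub (d j + t) (d j), abs_add_le (d j) t]
      nlinarith [abs_nonneg t, hγ.le]
    exact grad_bound _ _ γ (quadc_nonneg A T hlam j) hγ.le key


def unionEquiv {m : ℕ} {T Δ : Finset (Fin m)} (h : Disjoint T Δ) : Idx T ⊕ Idx Δ ≃ Idx (T ∪ Δ) where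
  toFun := Sum.elim (fun j => ⟨j.1, Finset.mem_union_left _ j.2⟩)
    (fun j => ⟨j.1, Finset.mem_union_right _ j.2⟩)
  invFun := fun j => if hj : j.1 ∈ T then Sum.inl ⟨j.1, hj⟩
    else Sum.inr ⟨j.1, (Finset.mem_union.mp j.2).resolve_left hj⟩
  left_inv := by
    rintro (⟨j, hj⟩ | ⟨j, hj⟩)
    · simp [hj]
    · simp [Finset.disjoint_right.mp h hj]
  right_inv := by
    rintro ⟨j, hj⟩
    by_cases h1 : j ∈ T <;> simp [h1]

lemma sum_split {m : ℕ} {T Δ : Finset (Fin m)} (hTΔ : Disjoint T Δ) (f : Idx (T ∪ Δ) → ℝ) :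
    ∑ j, f j = (∑ j : Idx T, f ⟨j.1, Finset.mem_union_left _ j.2⟩)
      + ∑ j : Idx Δ, f ⟨j.1, Finset.mem_union_right _ j.2⟩ := by
  rw [← Equiv.sum_comp (unionEquiv hTΔ) f, Fintype.sum_sum_type]
  rfl

lemma sum_subtype_full {m : ℕ} (U : Finset (Fin m)) (g : Fin m → ℝ) (hg : ∀ i ∉ U, g i = 0) :
    ∑ k : Idx U, g k.1 = ∑ k, g k := by
  rw [Finset.sum_coe_sort U g]
  exact Finset.sum_subset (Finset.subset_univ U) fun x _ hx => hg x hx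

lemma colsub_union_mulVec {n m : ℕ} (A : Matrix (Fin n) (Fin m) ℝ) {T Δ : Finset (Fin m)}
    (hTΔ : Disjoint T Δ) (u : Idx (T ∪ Δ) → ℝ) (i : Fin n) :
    (colsub A (T ∪ Δ)).mulVec u i
      = (colsub A T).mulVec (fun j => u ⟨j.1, Finset.mem_union_left _ j.2⟩) i
        + (colsub A Δ).mulVec (fun j => u ⟨j.1, Finset.mem_union_right _ j.2⟩) i := by
  simp only [Matrix.mulVec, dotProduct, colsub, Matrix.of_apply]
  exact sum_split hTΔ _

lemma colsubT_mulVec_onT {n m : ℕ} (A : Matrix (Fin n) (Fin m) ℝ) {T Δ : Finset (Fin m)}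
    (w : Fin n → ℝ) (j : Idx T) (h : j.1 ∈ T ∪ Δ) :
    ((colsub A (T ∪ Δ))ᵀ).mulVec w ⟨j.1, h⟩ = ((colsub A T)ᵀ).mulVec w j := rfl

lemma colsubT_mulVec_onD {n m : ℕ} (A : Matrix (Fin n) (Fin m) ℝ) {T Δ : Finset (Fin m)}
    (w : Fin n → ℝ) (j : Idx Δ) (h : j.1 ∈ T ∪ Δ) :
    ((colsub A (T ∪ Δ))ᵀ).mulVec w ⟨j.1, h⟩ = ((colsub A Δ)ᵀ).mulVec w j := rfl

lemma diag_mulVec {m : ℕ} {T Δ : Finset (Fin m)} (lam : ℝ)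
    (u : Idx (T ∪ Δ) → ℝ) (k : Idx (T ∪ Δ)) :
    ((lam • (Matrix.of (fun i j => if i = j ∧ (i : Fin m) ∈ T then (1 : ℝ) else 0) :
      Matrix (Idx (T ∪ Δ)) (Idx (T ∪ Δ)) ℝ)).mulVec u) k
      = lam * (if k.1 ∈ T then u k else 0) := by
  rw [Matrix.smul_mulVec]
  simp only [Pi.smul_apply, smul_eq_mul]
  congr 1
  simp only [Matrix.mulVec, dotProduct, Matrix.of_apply]
  have key : ∀ l, (if k = l ∧ k.1 ∈ T then (1:ℝ) else 0) * u l
      = if l = k then (if k.1 ∈ T then u k else 0) else 0 := by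
    intro l
    by_cases h1 : k = l
    · subst h1; by_cases h2 : k.1 ∈ T <;> simp [h2]
    · simp [h1, Ne.symm h1]
  rw [Finset.sum_congr rfl fun l _ => key l, Finset.sum_ite_eq' Finset.univ k]
  simp

lemma Q_decomp {n m : ℕ} (A : Matrix (Fin n) (Fin m) ℝ) {T Δ : Finset (Fin m)}
    (lam : ℝ) (u : Idx (T ∪ Δ) → ℝ) (k : Idx (T ∪ Δ)) :
    (Qmat A T Δ lam).mulVec u k
      = ((colsub A (T ∪ Δ))ᵀ).mulVec ((colsub A (T ∪ Δ)).mulVec u) k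
        + lam * (if k.1 ∈ T then u k else 0) := by
  unfold Qmat
  rw [Matrix.add_mulVec]
  simp only [Pi.add_apply]
  rw [diag_mulVec lam u k, ← Matrix.mulVec_mulVec]

lemma Q_apply_T {n m : ℕ} (A : Matrix (Fin n) (Fin m) ℝ) {T Δ : Finset (Fin m)}
    (hTΔ : Disjoint T Δ) (lam : ℝ) (u : Idx (T ∪ Δ) → ℝ) (j : Idx T) :
    (Qmat A T Δ lam).mulVec u ⟨j.1, Finset.mem_union_left _ j.2⟩
      = (((colsub A T)ᵀ * colsub A T + lam • 1).mulVec
          (fun k => u ⟨k.1, Finset.mem_union_left _ k.2⟩)) j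
        + (((colsub A T)ᵀ * colsub A Δ).mulVec
          (fun k => u ⟨k.1, Finset.mem_union_right _ k.2⟩)) j := by
  set uT : Idx T → ℝ := fun k => u ⟨k.1, Finset.mem_union_left _ k.2⟩ with huT
  set uD : Idx Δ → ℝ := fun k => u ⟨k.1, Finset.mem_union_right _ k.2⟩ with huD
  have hw : (colsub A (T ∪ Δ)).mulVec u
      = (colsub A T).mulVec uT + (colsub A Δ).mulVec uD := by
    funext i; rw [Pi.add_apply]; exact colsub_union_mulVec A hTΔ u i
  rw [Q_decomp, hw, if_pos j.2,
    colsubT_mulVec_onT A _ j (Finset.mem_union_left _ j.2),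
    Matrix.mulVec_add, Pi.add_apply, Matrix.mulVec_mulVec, Matrix.mulVec_mulVec,
    Matrix.add_mulVec, Pi.add_apply, Matrix.smul_mulVec, Matrix.one_mulVec]
  simp only [Pi.smul_apply, smul_eq_mul, huT]
  ring

lemma Q_apply_D {n m : ℕ} (A : Matrix (Fin n) (Fin m) ℝ) {T Δ : Finset (Fin m)}
    (hTΔ : Disjoint T Δ) (lam : ℝ) (u : Idx (T ∪ Δ) → ℝ) (j : Idx Δ) :
    (Qmat A T Δ lam).mulVec u ⟨j.1, Finset.mem_union_right _ j.2⟩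
      = (((colsub A Δ)ᵀ * colsub A T).mulVec
          (fun k => u ⟨k.1, Finset.mem_union_left _ k.2⟩)) j
        + (((colsub A Δ)ᵀ * colsub A Δ).mulVec
          (fun k => u ⟨k.1, Finset.mem_union_right _ k.2⟩)) j := by
  set uT : Idx T → ℝ := fun k => u ⟨k.1, Finset.mem_union_left _ k.2⟩ with huT
  set uD : Idx Δ → ℝ := fun k => u ⟨k.1, Finset.mem_union_right _ k.2⟩ with huD
  have hw : (colsub A (T ∪ Δ)).mulVec u
      = (colsub A T).mulVec uT + (colsub A Δ).mulVec uD := by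
    funext i; rw [Pi.add_apply]; exact colsub_union_mulVec A hTΔ u i
  rw [Q_decomp, hw, if_neg (Finset.disjoint_right.mp hTΔ j.2),
    colsubT_mulVec_onD A _ j (Finset.mem_union_right _ j.2),
    Matrix.mulVec_add, Pi.add_apply, Matrix.mulVec_mulVec, Matrix.mulVec_mulVec]
  ring


lemma dot_transpose {n : ℕ} {α : Type*} [Fintype α] (X : Matrix (Fin n) α ℝ)
    (x : α → ℝ) (u : Fin n → ℝ) : x ⬝ᵥ (Xᵀ.mulVec u) = (X.mulVec x) ⬝ᵥ u := by
  rw [Matrix.dotProduct_mulVec, Matrix.vecMul_transpose]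

lemma dot_sq {n : ℕ} {α : Type*} [Fintype α] (X : Matrix (Fin n) α ℝ) (v : α → ℝ) :
    v ⬝ᵥ ((Xᵀ * X).mulVec v) = ∑ i, (X.mulVec v) i ^ 2 := by
  rw [← Matrix.mulVec_mulVec, dot_transpose]
  simp [dotProduct, sq]

lemma quadform {n m : ℕ} (A : Matrix (Fin n) (Fin m) ℝ) {T Δ : Finset (Fin m)}
    (lam : ℝ) (w : Idx (T ∪ Δ) → ℝ) :
    w ⬝ᵥ (Qmat A T Δ lam).mulVec w
      = (∑ i, ((colsub A (T ∪ Δ)).mulVec w i) ^ 2)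
        + lam * ∑ k : Idx (T ∪ Δ), (if k.1 ∈ T then w k ^ 2 else 0) := by
  have h : (Qmat A T Δ lam).mulVec w = fun k =>
      ((colsub A (T ∪ Δ))ᵀ).mulVec ((colsub A (T ∪ Δ)).mulVec w) k
        + lam * (if k.1 ∈ T then w k else 0) := funext fun k => Q_decomp A lam w k
  rw [h]
  unfold dotProduct
  simp only [mul_add]
  rw [Finset.sum_add_distrib]
  congr 1
  · have := dot_sq (colsub A (T ∪ Δ)) w
    rw [← this, ← Matrix.mulVec_mulVec]
    rfl
  · rw [Finset.mul_sum]
    refine Finset.sum_congr rfl fun k _ => ?_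
    by_cases hk : k.1 ∈ T <;> simp [hk] <;> ring

lemma kerQ0 {n m : ℕ} {A : Matrix (Fin n) (Fin m) ℝ} {T Δ : Finset (Fin m)} {lam : ℝ}
    (hQ : IsUnit (Qmat A T Δ lam)) (w : Idx (T ∪ Δ) → ℝ)
    (h : (Qmat A T Δ lam).mulVec w = 0) : w = 0 := by
  have hdet : IsUnit (Qmat A T Δ lam).det := (Matrix.isUnit_iff_isUnit_det _).mp hQ
  have := congrArg ((Qmat A T Δ lam)⁻¹.mulVec) h
  rwa [Matrix.mulVec_mulVec, Matrix.nonsing_inv_mul _ hdet, Matrix.one_mulVec,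
    Matrix.mulVec_zero] at this

lemma kerQ {n m : ℕ} {A : Matrix (Fin n) (Fin m) ℝ} {T Δ : Finset (Fin m)} {lam : ℝ}
    (hQ : IsUnit (Qmat A T Δ lam)) (hlam : 0 ≤ lam) (w : Idx (T ∪ Δ) → ℝ)
    (h : w ⬝ᵥ (Qmat A T Δ lam).mulVec w = 0) : w = 0 := by
  rw [quadform] at h
  have h1 : 0 ≤ ∑ i, ((colsub A (T ∪ Δ)).mulVec w i) ^ 2 :=
    Finset.sum_nonneg fun i _ => sq_nonneg _
  have h2 : 0 ≤ ∑ k : Idx (T ∪ Δ), (if k.1 ∈ T then w k ^ 2 else 0) :=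
    Finset.sum_nonneg fun k _ => by split <;> [exact sq_nonneg _; exact le_rfl]
  have h3 : 0 ≤ lam * ∑ k : Idx (T ∪ Δ), (if k.1 ∈ T then w k ^ 2 else 0) :=
    mul_nonneg hlam h2
  have hR : ∑ i, ((colsub A (T ∪ Δ)).mulVec w i) ^ 2 = 0 := by linarith
  have hRz : (colsub A (T ∪ Δ)).mulVec w = 0 := by
    funext i
    have := (Finset.sum_eq_zero_iff_of_nonneg (fun i _ => sq_nonneg _)).mp hR i (Finset.mem_univ i)
    simpa using sq_eq_zero_iff.mp this
  have hlw : ∀ k : Idx (T ∪ Δ), k.1 ∈ T → lam * w k = 0 := by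
    intro k hk
    have hls : lam * ∑ k : Idx (T ∪ Δ), (if k.1 ∈ T then w k ^ 2 else 0) = 0 := by linarith
    rcases mul_eq_zero.mp hls with hl | hs
    · rw [hl, zero_mul]
    · have := (Finset.sum_eq_zero_iff_of_nonneg
        (fun k _ => by split <;> [exact sq_nonneg _; exact le_rfl])).mp hs k (Finset.mem_univ k)
      rw [if_pos hk] at this
      rw [sq_eq_zero_iff.mp this, mul_zero]
  apply kerQ0 hQ
  funext k
  rw [Q_decomp, hRz]
  simp only [Matrix.mulVec_zero, Pi.zero_apply, zero_add]
  split
  · next hk => exact hlw k hk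
  · exact mul_zero lam

lemma Bunit {n m : ℕ} {A : Matrix (Fin n) (Fin m) ℝ} {T Δ : Finset (Fin m)} {lam : ℝ}
    (hTΔ : Disjoint T Δ) (hQ : IsUnit (Qmat A T Δ lam)) (hlam : 0 ≤ lam) :
    IsUnit ((colsub A T)ᵀ * colsub A T + lam • (1 : Matrix (Idx T) (Idx T) ℝ)) := by
  set B := (colsub A T)ᵀ * colsub A T + lam • (1 : Matrix (Idx T) (Idx T) ℝ) with hB
  rw [Matrix.isUnit_iff_isUnit_det, isUnit_iff_ne_zero]
  intro hdet
  obtain ⟨v, hv0, hv⟩ := Matrix.exists_mulVec_eq_zero_iff.mpr hdet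
  have hq : v ⬝ᵥ B.mulVec v = 0 := by rw [hv, dotProduct_zero]
  have hexp : v ⬝ᵥ B.mulVec v
      = (∑ i, ((colsub A T).mulVec v i) ^ 2) + lam * ∑ k, v k ^ 2 := by
    rw [hB, Matrix.add_mulVec, dotProduct_add, dot_sq, Matrix.smul_mulVec,
      Matrix.one_mulVec, dotProduct_smul]
    simp [dotProduct, sq]
  rw [hexp] at hq
  have h1 : 0 ≤ ∑ i, ((colsub A T).mulVec v i) ^ 2 := Finset.sum_nonneg fun i _ => sq_nonneg _
  have h2 : 0 ≤ ∑ k, v k ^ 2 := Finset.sum_nonneg fun k _ => sq_nonneg _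
  have hAv : (colsub A T).mulVec v = 0 := by
    have hR : ∑ i, ((colsub A T).mulVec v i) ^ 2 = 0 := by nlinarith [mul_nonneg hlam h2]
    funext i
    have := (Finset.sum_eq_zero_iff_of_nonneg (fun i _ => sq_nonneg _)).mp hR i (Finset.mem_univ i)
    simpa using sq_eq_zero_iff.mp this
  have hlv : ∀ k, lam * v k = 0 := by
    intro k
    have hls : lam * ∑ k, v k ^ 2 = 0 := by nlinarith
    rcases mul_eq_zero.mp hls with hl | hs
    · rw [hl, zero_mul]
    · have := (Finset.sum_eq_zero_iff_of_nonneg (fun k _ => sq_nonneg _)).mp hs k (Finset.mem_univ k)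
      rw [sq_eq_zero_iff.mp this, mul_zero]
  set w : Idx (T ∪ Δ) → ℝ := fun k => if h : k.1 ∈ T then v ⟨k.1, h⟩ else 0 with hw
  have huT : (fun k : Idx T => w ⟨k.1, Finset.mem_union_left _ k.2⟩) = v :=
    funext fun k => dif_pos k.2
  have huD : (fun k : Idx Δ => w ⟨k.1, Finset.mem_union_right _ k.2⟩) = (0 : Idx Δ → ℝ) :=
    funext fun k => dif_neg (Finset.disjoint_right.mp hTΔ k.2)
  have hQw : (Qmat A T Δ lam).mulVec w = 0 := by
    funext k
    rw [Q_decomp]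
    have hRw : (colsub A (T ∪ Δ)).mulVec w = 0 := by
      funext i
      rw [colsub_union_mulVec A hTΔ w i, huT, huD, hAv, Matrix.mulVec_zero]
      simp
    rw [hRw]
    simp only [Matrix.mulVec_zero, Pi.zero_apply, zero_add]
    split
    · next hk => rw [hw]; simp only [dif_pos hk]; exact hlv _
    · exact mul_zero lam
  have hw0 := kerQ0 hQ w hQw
  apply hv0
  funext k
  have := congrFun hw0 ⟨k.1, Finset.mem_union_left _ k.2⟩
  rw [hw] at this
  simpa [dif_pos k.2] using this


lemma Sunit {n m : ℕ} {A : Matrix (Fin n) (Fin m) ℝ} {T Δ : Finset (Fin m)} {lam : ℝ}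
    (hTΔ : Disjoint T Δ) (hQ : IsUnit (Qmat A T Δ lam)) (hlam : 0 ≤ lam) :
    IsUnit ((colsub A Δ)ᵀ * Mmat A T lam * colsub A Δ) := by
  set AT := colsub A T with hAT
  set AD := colsub A Δ with hAD
  set B := ATᵀ * AT + lam • (1 : Matrix (Idx T) (Idx T) ℝ) with hB
  have hBu : IsUnit B := Bunit hTΔ hQ hlam
  have hBdet : IsUnit B.det := (Matrix.isUnit_iff_isUnit_det _).mp hBu
  set S := ADᵀ * Mmat A T lam * AD with hS
  rw [Matrix.isUnit_iff_isUnit_det, isUnit_iff_ne_zero]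
  intro hdet
  obtain ⟨v, hv0, hv⟩ := Matrix.exists_mulVec_eq_zero_iff.mpr hdet
  set x : Idx T → ℝ := -(B⁻¹.mulVec ((ATᵀ * AD).mulVec v)) with hx
  set a : Fin n → ℝ := AT.mulVec x with ha
  set b : Fin n → ℝ := AD.mulVec v with hb
  -- E2 : x ⬝ᵥ B x = - ∑ a*b
  have hBx : B.mulVec x = -((ATᵀ * AD).mulVec v) := by
    rw [hx, Matrix.mulVec_neg, Matrix.mulVec_mulVec, Matrix.mul_nonsing_inv _ hBdet,
      Matrix.one_mulVec]
  have hE2 : x ⬝ᵥ B.mulVec x = -(∑ i, a i * b i) := by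
    rw [hBx, dotProduct_neg, ← Matrix.mulVec_mulVec, dot_transpose]
    rw [ha, hb]
    rfl
  -- E1 : x ⬝ᵥ B x = ∑ a² + lam ∑ x²
  have hE1 : x ⬝ᵥ B.mulVec x = (∑ i, a i ^ 2) + lam * ∑ k, x k ^ 2 := by
    rw [hB, Matrix.add_mulVec, dotProduct_add, dot_sq, Matrix.smul_mulVec,
      Matrix.one_mulVec, dotProduct_smul]
    simp [dotProduct, sq, ha]
  -- E3 : v ⬝ᵥ S v = ∑ b² + ∑ a*b
  have hMu : (Mmat A T lam).mulVec b = b + a := by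
    unfold Mmat
    rw [← hAT, ← hB, Matrix.sub_mulVec, Matrix.one_mulVec]
    have : (AT * B⁻¹ * ATᵀ).mulVec b = -a := by
      rw [← Matrix.mulVec_mulVec, ← Matrix.mulVec_mulVec]
      have h1 : ATᵀ.mulVec b = (ATᵀ * AD).mulVec v := by
        rw [← Matrix.mulVec_mulVec, hb]
      rw [h1]
      have h2 : B⁻¹.mulVec ((ATᵀ * AD).mulVec v) = -x := by rw [hx, neg_neg]
      rw [h2, Matrix.mulVec_neg, ha]
    rw [this]
    funext i; simp [sub_neg_eq_add]
  have hE3 : v ⬝ᵥ S.mulVec v = (∑ i, b i ^ 2) + ∑ i, a i * b i := by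
    rw [hS, ← Matrix.mulVec_mulVec, ← Matrix.mulVec_mulVec, dot_transpose, ← hb, hMu]
    simp only [dotProduct, Pi.add_apply, mul_add, Finset.sum_add_distrib]
    congr 1
    · exact Finset.sum_congr rfl fun i _ => by ring
    · exact Finset.sum_congr rfl fun i _ => by ring
  -- build w and E4
  set w : Idx (T ∪ Δ) → ℝ := fun k => if h : k.1 ∈ T then x ⟨k.1, h⟩
    else v ⟨k.1, (Finset.mem_union.mp k.2).resolve_left h⟩ with hw
  have huT : (fun k : Idx T => w ⟨k.1, Finset.mem_union_left _ k.2⟩) = x :=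
    funext fun k => dif_pos k.2
  have huD : (fun k : Idx Δ => w ⟨k.1, Finset.mem_union_right _ k.2⟩) = v := by
    funext k
    rw [hw]
    simp only
    rw [dif_neg (Finset.disjoint_right.mp hTΔ k.2)]
  have hRw : (colsub A (T ∪ Δ)).mulVec w = a + b := by
    funext i
    rw [colsub_union_mulVec A hTΔ w i, huT, huD]
    rfl
  have hE4 : w ⬝ᵥ (Qmat A T Δ lam).mulVec w
      = (∑ i, (a i + b i) ^ 2) + lam * ∑ k, x k ^ 2 := by
    rw [quadform, hRw]
    have hA : (∑ i, ((a + b) i) ^ 2) = ∑ i, (a i + b i) ^ 2 := rfl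
    rw [hA]
    congr 1
    congr 1
    rw [sum_split hTΔ (fun k => if k.1 ∈ T then w k ^ 2 else 0)]
    have hT : ∀ j : Idx T, (if ((⟨j.1, Finset.mem_union_left _ j.2⟩ : Idx (T ∪ Δ)).1 ∈ T)
        then w ⟨j.1, Finset.mem_union_left _ j.2⟩ ^ 2 else 0) = x j ^ 2 := by
      intro j
      rw [if_pos j.2]
      exact congrArg (· ^ 2) (congrFun huT j)
    have hD : ∀ j : Idx Δ, (if ((⟨j.1, Finset.mem_union_right _ j.2⟩ : Idx (T ∪ Δ)).1 ∈ T)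
        then w ⟨j.1, Finset.mem_union_right _ j.2⟩ ^ 2 else 0) = 0 := by
      intro j
      rw [if_neg (Finset.disjoint_right.mp hTΔ j.2)]
    rw [Finset.sum_congr rfl fun j _ => hT j, Finset.sum_congr rfl fun j _ => hD j]
    simp
  -- combine
  have hvSv : v ⬝ᵥ S.mulVec v = 0 := by rw [hv, dotProduct_zero]
  have hwQw : w ⬝ᵥ (Qmat A T Δ lam).mulVec w = 0 := by
    have hsum : ∑ i, (a i + b i) ^ 2
        = (∑ i, a i ^ 2) + 2 * (∑ i, a i * b i) + ∑ i, b i ^ 2 := by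
      rw [Finset.mul_sum, ← Finset.sum_add_distrib, ← Finset.sum_add_distrib]
      exact Finset.sum_congr rfl fun i _ => by ring
    rw [hE4, hsum]
    have e12 : (∑ i, a i ^ 2) + lam * ∑ k, x k ^ 2 = -(∑ i, a i * b i) := by
      rw [← hE1, hE2]
    rw [hE3] at hvSv
    linarith
  have hw0 := kerQ hQ hlam w hwQw
  apply hv0
  funext k
  exact (congrFun huD k).symm.trans (congrFun hw0 ⟨k.1, Finset.mem_union_right _ k.2⟩)


set_option maxHeartbeats 1000000 in
/-- `‖d(Δ) − c(Δ)‖₂ ≤ γ√|Δ|·f₁(Δ)` where `d(Δ)` minimizes `L` and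
`c(Δ)` minimizes `L₁`, both over vectors supported on `T ∪ Δ`. -/
theorem stmt5 {n m : ℕ} (A : Matrix (Fin n) (Fin m) ℝ) (T Δ : Finset (Fin m))
    (hTΔ : Disjoint T Δ) (γ lam : ℝ) (hγ : 0 < γ) (hlam : 0 ≤ lam)
    (y : Fin n → ℝ) (μ : Fin m → ℝ)
    (hQ : IsUnit (Qmat A T Δ lam)) (d c : Fin m → ℝ)
    (hd0 : ∀ i ∉ T ∪ Δ, d i = 0)
    (hdmin : ∀ b : Fin m → ℝ, (∀ i ∉ T ∪ Δ, b i = 0) →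
      Lobj A T γ lam y μ d ≤ Lobj A T γ lam y μ b)
    (hc0 : ∀ i ∉ T ∪ Δ, c i = 0)
    (hcmin : ∀ b : Fin m → ℝ, (∀ i ∉ T ∪ Δ, b i = 0) →
      L1obj A T lam y μ c ≤ L1obj A T lam y μ b) :
    l2 (fun i => d i - c i) ≤ γ * Real.sqrt (Δ.card : ℝ) * f1 A T Δ lam := by

  classical
  have hgc := opt_c A T Δ hlam y μ c hc0 hcmin
  obtain ⟨hdT, hdD⟩ := opt_d A T Δ hTΔ hγ hlam y μ d hd0 hdmin
  set AT := colsub A T with hAT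
  set AD := colsub A Δ with hAD
  set B := ATᵀ * AT + lam • (1 : Matrix (Idx T) (Idx T) ℝ) with hB
  have hBu : IsUnit B := Bunit hTΔ hQ hlam
  have hBdet : IsUnit B.det := (Matrix.isUnit_iff_isUnit_det _).mp hBu
  have hSu : IsUnit (ADᵀ * Mmat A T lam * AD) := Sunit hTΔ hQ hlam
  have hSdet : IsUnit (ADᵀ * Mmat A T lam * AD).det := (Matrix.isUnit_iff_isUnit_det _).mp hSu
  set P := Pmat A T Δ lam with hP
  have hPdef : P = (ADᵀ * Mmat A T lam * AD)⁻¹ := rfl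
  set C : Matrix (Idx T) (Idx Δ) ℝ := ATᵀ * AD with hC
  set X₁ : Matrix (Idx T) (Idx Δ) ℝ := -(B⁻¹ * C * P) with hX1
  set z : Idx Δ → ℝ := fun j => gradf A T lam y μ d j.1 with hz
  set hh : Idx (T ∪ Δ) → ℝ := fun k => d k.1 - c k.1 with hhh
  set u : Idx (T ∪ Δ) → ℝ := fun k => if h : k.1 ∈ T then X₁.mulVec z ⟨k.1, h⟩
    else P.mulVec z ⟨k.1, (Finset.mem_union.mp k.2).resolve_left h⟩ with hu
  have huT : (fun k : Idx T => u ⟨k.1, Finset.mem_union_left _ k.2⟩) = X₁.mulVec z :=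
    funext fun k => dif_pos k.2
  have huD : (fun k : Idx Δ => u ⟨k.1, Finset.mem_union_right _ k.2⟩) = P.mulVec z := by
    funext k
    rw [hu]
    simp only
    rw [dif_neg (Finset.disjoint_right.mp hTΔ k.2)]
  -- Q *ᵥ hh = grad of d
  have hQh : (Qmat A T Δ lam).mulVec hh = fun k => gradf A T lam y μ d k.1 := by
    funext k
    rw [Q_decomp]
    have hAU : (colsub A (T ∪ Δ)).mulVec hh = fun i => A.mulVec d i - A.mulVec c i := by
      funext i
      show ∑ j : Idx (T ∪ Δ), A i j.1 * (d j.1 - c j.1) = _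
      rw [sum_subtype_full (T ∪ Δ) (fun j => A i j * (d j - c j))
        (fun j hj => by show A i j * (d j - c j) = 0; rw [hd0 j hj, hc0 j hj]; ring)]
      simp [Matrix.mulVec, dotProduct, mul_sub, Finset.sum_sub_distrib]
    rw [hAU]
    have h1 : ((colsub A (T ∪ Δ))ᵀ).mulVec (fun i => A.mulVec d i - A.mulVec c i) k
        = ∑ i, A i k.1 * (A.mulVec d i - A.mulVec c i) := rfl
    rw [h1]
    have h2 : gradf A T lam y μ c k.1 = 0 := hgc k.1 k.2
    have hhk : hh k = d k.1 - c k.1 := rfl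
    have expand : ∑ i, A i k.1 * (A.mulVec d i - A.mulVec c i)
        = (∑ i, A i k.1 * (y i - A.mulVec c i)) - ∑ i, A i k.1 * (y i - A.mulVec d i) := by
      rw [← Finset.sum_sub_distrib]
      exact Finset.sum_congr rfl fun i _ => by ring
    unfold gradf at h2 ⊢
    by_cases hk : k.1 ∈ T
    · rw [if_pos hk] at h2 ⊢
      rw [if_pos hk, expand, hhk]
      linarith
    · rw [if_neg hk] at h2 ⊢
      rw [if_neg hk, expand]
      linarith
  -- Q *ᵥ u = grad of d
  have hQu : (Qmat A T Δ lam).mulVec u = fun k => gradf A T lam y μ d k.1 := by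
    funext k
    by_cases hk : k.1 ∈ T
    · have happ := Q_apply_T A hTΔ lam u ⟨k.1, hk⟩
      rw [huT, huD, Matrix.mulVec_mulVec, Matrix.mulVec_mulVec] at happ
      have hBX : B * X₁ = -(C * P) := by
        rw [hX1, Matrix.mul_neg]
        congr 1
        rw [← Matrix.mul_assoc, ← Matrix.mul_assoc, Matrix.mul_nonsing_inv _ hBdet,
          Matrix.one_mul]
      rw [hBX, Matrix.neg_mulVec] at happ
      rw [show (colsub A T)ᵀ * colsub A Δ * P = C * P from rfl] at happ
      simp only [Pi.neg_apply, neg_add_cancel] at happ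
      rw [hdT k.1 hk]
      exact happ
    · have hkD : k.1 ∈ Δ := (Finset.mem_union.mp k.2).resolve_left hk
      have happ := Q_apply_D A hTΔ lam u ⟨k.1, hkD⟩
      rw [huT, huD, Matrix.mulVec_mulVec, Matrix.mulVec_mulVec] at happ
      have hM : Mmat A T lam = 1 - AT * B⁻¹ * ATᵀ := rfl
      have hSid : ADᵀ * Mmat A T lam * AD = ADᵀ * AD - ADᵀ * AT * B⁻¹ * C := by
        rw [hM]
        simp only [Matrix.mul_sub, Matrix.sub_mul, Matrix.mul_one, hC, Matrix.mul_assoc]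
      have hkey : ADᵀ * AT * X₁ + ADᵀ * AD * P = 1 := by
        rw [hX1, Matrix.mul_neg, ← Matrix.mul_assoc, ← Matrix.mul_assoc, neg_add_eq_sub,
          ← Matrix.sub_mul, ← hSid, hPdef, Matrix.mul_nonsing_inv _ hSdet]
      have hval : ((ADᵀ * AT * X₁).mulVec z) ⟨k.1, hkD⟩ + ((ADᵀ * AD * P).mulVec z) ⟨k.1, hkD⟩
          = z ⟨k.1, hkD⟩ := by
        have : ((ADᵀ * AT * X₁).mulVec z) + ((ADᵀ * AD * P).mulVec z)
            = (1 : Matrix (Idx Δ) (Idx Δ) ℝ).mulVec z := by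
          rw [← Matrix.add_mulVec, hkey]
        have h4 := congrFun this ⟨k.1, hkD⟩
        rw [Matrix.one_mulVec] at h4
        exact h4
      exact happ.trans hval
  -- hh = u
  have hhu : hh = u := by
    have hsub : (Qmat A T Δ lam).mulVec (hh - u) = 0 := by
      rw [Matrix.mulVec_sub, hQh, hQu, sub_self]
    exact sub_eq_zero.mp (kerQ0 hQ _ hsub)
  -- norm bounds
  have hf1 : f1 A T Δ lam = Real.sqrt (spec (B⁻¹ * ATᵀ * AD * P) ^ 2 + spec P ^ 2) := rfl
  have hX1spec : spec X₁ = spec (B⁻¹ * ATᵀ * AD * P) := by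
    rw [hX1, spec_neg]
    congr 2
    rw [hC, Matrix.mul_assoc]
  have hzbound : ∑ j : Idx Δ, z j ^ 2 ≤ (Δ.card : ℝ) * γ ^ 2 := by
    have hzj : ∀ j : Idx Δ, z j ^ 2 ≤ γ ^ 2 := by
      intro j
      have h := hdD j.1 j.2
      have := abs_le.mp h
      nlinarith
    calc ∑ j : Idx Δ, z j ^ 2 ≤ ∑ _j : Idx Δ, γ ^ 2 := Finset.sum_le_sum fun j _ => hzj j
      _ = (Fintype.card (Idx Δ) : ℝ) * γ ^ 2 := by rw [Finset.sum_const]; simp [nsmul_eq_mul]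
      _ = (Δ.card : ℝ) * γ ^ 2 := by rw [Fintype.card_coe]
  have hsum : ∑ i, (d i - c i) ^ 2
      = (∑ j : Idx T, (X₁.mulVec z j) ^ 2) + ∑ j : Idx Δ, (P.mulVec z j) ^ 2 := by
    rw [← sum_subtype_full (T ∪ Δ) (fun i => (d i - c i) ^ 2)
      (fun i hi => by show (d i - c i) ^ 2 = 0; rw [hd0 i hi, hc0 i hi]; ring)]
    have hpt : ∀ k : Idx (T ∪ Δ), (d k.1 - c k.1) ^ 2 = u k ^ 2 := by
      intro k
      have : hh k = u k := congrFun hhu k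
      rw [← this]
    rw [Finset.sum_congr rfl fun k _ => hpt k, sum_split hTΔ (fun k => u k ^ 2)]
    congr 1
    · exact Finset.sum_congr rfl fun j _ => congrArg (· ^ 2) (congrFun huT j)
    · exact Finset.sum_congr rfl fun j _ => congrArg (· ^ 2) (congrFun huD j)
  have hb1 : ∑ j : Idx T, (X₁.mulVec z j) ^ 2 ≤ spec X₁ ^ 2 * ∑ j, z j ^ 2 := by
    have h := pow_le_pow_left₀ (l2_nonneg _) (l2_mulVec_le X₁ z) 2
    rw [l2_sq, mul_pow, l2_sq] at h
    exact h
  have hb2 : ∑ j : Idx Δ, (P.mulVec z j) ^ 2 ≤ spec P ^ 2 * ∑ j, z j ^ 2 := by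
    have h := pow_le_pow_left₀ (l2_nonneg _) (l2_mulVec_le P z) 2
    rw [l2_sq, mul_pow, l2_sq] at h
    exact h
  have hRHS : 0 ≤ γ * Real.sqrt (Δ.card : ℝ) * f1 A T Δ lam := by
    rw [hf1]
    positivity
  have hfinal : ∑ i, (d i - c i) ^ 2 ≤ (γ * Real.sqrt (Δ.card : ℝ) * f1 A T Δ lam) ^ 2 := by
    have hf1sq : f1 A T Δ lam ^ 2 = spec (B⁻¹ * ATᵀ * AD * P) ^ 2 + spec P ^ 2 := by
      rw [hf1]
      exact Real.sq_sqrt (by positivity)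
    have hcard : Real.sqrt ((Δ.card : ℝ)) ^ 2 = (Δ.card : ℝ) :=
      Real.sq_sqrt (Nat.cast_nonneg _)
    rw [mul_pow, mul_pow, hcard, hf1sq, hsum, ← hX1spec]
    have hz2 : 0 ≤ ∑ j, z j ^ 2 := Finset.sum_nonneg fun j _ => sq_nonneg _
    have e1 := hb1.trans (mul_le_mul_of_nonneg_left hzbound (sq_nonneg (spec X₁)))
    have e2 := hb2.trans (mul_le_mul_of_nonneg_left hzbound (sq_nonneg (spec P)))
    nlinarith [sq_nonneg (spec X₁), sq_nonneg (spec P)]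
  calc l2 (fun i => d i - c i) = Real.sqrt (∑ i, (d i - c i) ^ 2) := rfl
    _ ≤ Real.sqrt ((γ * Real.sqrt (Δ.card : ℝ) * f1 A T Δ lam) ^ 2) :=
      Real.sqrt_le_sqrt hfinal
    _ = γ * Real.sqrt (Δ.card : ℝ) * f1 A T Δ lam := Real.sqrt_sq hRHS
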